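/- Let E = ℂ/ℤ[i] and let G = G(4,2,2) act on A = E² where the generators act by the matrices α = [[-1, 1+i],[0,1]], β = [[-i, i-1],[0,i]], γ = [[-1,0],[i-1,1]] (entries in ℤ[i], acting on ℂ² descending to E²). Then the fixed locus of γ in A is {(x,y) ∈ A : x = ix}, i.e., {e, t₀} × E where t₀ is the unique nonzero i-invariant point of E, so A^γ is isomorphic to a disjoint union of two copies of E. -/

import Mathlib

open Complex

/-- The Gaussian lattice `ℤ[i] ⊂ ℂ` as an additive subgroup (generated by `1` and `i`). -/
noncomputable def Lambda : AddSubgroup ℂ := AddSubgroup.closure {1, Complex.I}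

/-- The elliptic curve `E = ℂ/ℤ[i]`. -/
abbrev EC : Type := ℂ ⧸ Lambda

/-- The projection `ℂ → E`. -/
noncomputable def piE (z : ℂ) : EC := QuotientAddGroup.mk z

lemma mulI_maps : Lambda ≤ Lambda.comap (AddMonoidHom.mulLeft Complex.I) := by
  rw [Lambda, AddSubgroup.closure_le]
  rintro z hz
  simp only [Set.mem_insert_iff, Set.mem_singleton_iff] at hz
  have hI : Complex.I ∈ Lambda :=
    AddSubgroup.subset_closure (by simp : Complex.I ∈ ({1, Complex.I} : Set ℂ))
  have h1 : (1 : ℂ) ∈ Lambda :=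
    AddSubgroup.subset_closure (by simp : (1 : ℂ) ∈ ({1, Complex.I} : Set ℂ))
  rcases hz with rfl | rfl
  · simpa [Lambda] using hI
  · have : (-1 : ℂ) ∈ Lambda := neg_mem h1
    simpa [Complex.I_mul_I, Lambda] using this

/-- Multiplication by `i` descends to `E = ℂ/ℤ[i]`. -/
noncomputable def mulIE : EC →+ EC :=
  QuotientAddGroup.map Lambda Lambda (AddMonoidHom.mulLeft Complex.I) mulI_maps

/-- The automorphism `γ = [[-1, 0], [i-1, 1]]` of `A = E²` (one of the three
generators of the `G(4,2,2)`-action on `A` of Type (C)):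
`(x, y) ↦ (-x, (i-1)x + y)`. -/
noncomputable def gammaA (p : EC × EC) : EC × EC := (-p.1, mulIE p.1 - p.1 + p.2)

/-- The set `{m + n i}` as an additive subgroup of `ℂ`. -/
noncomputable def LambdaSet : AddSubgroup ℂ where
  carrier := {z | ∃ m n : ℤ, z = m + n * Complex.I}
  zero_mem' := ⟨0, 0, by simp⟩
  add_mem' := by
    rintro a b ⟨m, n, rfl⟩ ⟨p, q, rfl⟩
    exact ⟨m + p, n + q, by push_cast; ring⟩
  neg_mem' := by
    rintro a ⟨m, n, rfl⟩
    exact ⟨-m, -n, by push_cast; ring⟩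

lemma one_mem_Lambda : (1 : ℂ) ∈ Lambda :=
  AddSubgroup.subset_closure (by simp : (1 : ℂ) ∈ ({1, Complex.I} : Set ℂ))

lemma I_mem_Lambda : Complex.I ∈ Lambda :=
  AddSubgroup.subset_closure (by simp : Complex.I ∈ ({1, Complex.I} : Set ℂ))

lemma mem_Lambda_iff (z : ℂ) : z ∈ Lambda ↔ ∃ m n : ℤ, z = m + n * Complex.I := by
  constructor
  · intro h
    have hle : Lambda ≤ LambdaSet := by
      rw [Lambda, AddSubgroup.closure_le]
      rintro w hw
      simp only [Set.mem_insert_iff, Set.mem_singleton_iff] at hw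
      rcases hw with rfl | rfl
      · exact ⟨1, 0, by simp⟩
      · exact ⟨0, 1, by simp⟩
    exact hle h
  · rintro ⟨m, n, rfl⟩
    have h1 : (m : ℂ) ∈ Lambda := by
      have := AddSubgroup.zsmul_mem Lambda one_mem_Lambda m
      simpa [zsmul_eq_mul] using this
    have h2 : (n : ℂ) * Complex.I ∈ Lambda := by
      have := AddSubgroup.zsmul_mem Lambda I_mem_Lambda n
      simpa [zsmul_eq_mul] using this
    exact add_mem h1 h2

lemma I_sub_one_ne : (Complex.I - 1 : ℂ) ≠ 0 :=
  sub_ne_zero.mpr (by intro h; simpa using congrArg Complex.im h)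

lemma key (z : ℂ) :
    (Complex.I - 1) * z ∈ Lambda ↔ z ∈ Lambda ∨ z - (1 + Complex.I) / 2 ∈ Lambda := by
  rw [mem_Lambda_iff, mem_Lambda_iff, mem_Lambda_iff]
  constructor
  · rintro ⟨m, n, h⟩
    have hz : z = ((n : ℂ) - m - (m + n) * Complex.I) / 2 := by
      apply mul_left_cancel₀ I_sub_one_ne
      rw [h]
      linear_combination (((m : ℂ) + n) / 2) * Complex.I_sq
    rcases Int.even_or_odd (m + n) with ⟨k, hk⟩ | ⟨k, hk⟩
    · left
      refine ⟨k - m, -k, ?_⟩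
      have hn : n = k + k - m := by omega
      subst hn
      rw [hz]; push_cast; ring
    · right
      refine ⟨k - m, -(k + 1), ?_⟩
      have hn : n = 2 * k + 1 - m := by omega
      subst hn
      rw [hz]; push_cast; ring
  · rintro (⟨m, n, rfl⟩ | h)
    · exact ⟨-m - n, m - n, by push_cast; linear_combination (n : ℂ) * Complex.I_sq⟩
    · obtain ⟨m, n, hm⟩ := h
      have hz : z = (1 + Complex.I) / 2 + (m + n * Complex.I) := by
        linear_combination hm
      refine ⟨-1 - m - n, m - n, ?_⟩
      rw [hz]; push_cast
      linear_combination ((n : ℂ) + 1 / 2) * Complex.I_sq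

lemma piE_eq (a b : ℂ) : piE a = piE b ↔ a - b ∈ Lambda := by
  rw [piE, piE, QuotientAddGroup.eq, show -a + b = -(a - b) by ring, neg_mem_iff]

lemma mulIE_mk (z : ℂ) : mulIE (piE z) = piE (Complex.I * z) := rfl

lemma mulIE_fixed_iff (x : EC) :
    mulIE x = x ↔ x = piE 0 ∨ x = piE ((1 + Complex.I) / 2) := by
  induction x using QuotientAddGroup.induction_on with
  | H z =>
    show mulIE (piE z) = piE z ↔ piE z = piE 0 ∨ piE z = piE ((1 + Complex.I) / 2)
    rw [mulIE_mk, piE_eq, piE_eq, piE_eq, sub_zero,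
      show Complex.I * z - z = (Complex.I - 1) * z by ring]
    exact key z

lemma neg_piE (z : ℂ) : -piE z = piE (-z) := rfl

lemma t0_fixed : mulIE (piE ((1 + Complex.I) / 2)) = piE ((1 + Complex.I) / 2) := by
  rw [mulIE_mk, piE_eq]
  have : Complex.I * ((1 + Complex.I) / 2) - (1 + Complex.I) / 2 = -1 := by
    linear_combination (1 / 2 : ℂ) * Complex.I_sq
  rw [this]
  exact neg_mem one_mem_Lambda

lemma zero_fixed : mulIE (piE 0) = piE 0 := by
  rw [mulIE_mk, mul_zero]

lemma gamma_fixed_iff (p : EC × EC) : gammaA p = p ↔ mulIE p.1 = p.1 := by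
  constructor
  · intro h
    have h2 := congrArg Prod.snd h
    simp only [gammaA] at h2
    rw [add_eq_right, sub_eq_zero] at h2
    exact h2
  · intro h
    have hneg : -p.1 = p.1 := by
      rcases (mulIE_fixed_iff p.1).mp h with h0 | h0 <;> rw [h0]
      · simp [piE]
      · rw [neg_piE, piE_eq]
        have : -((1 + Complex.I) / 2) - (1 + Complex.I) / 2 = -(1 + Complex.I) := by ring
        rw [this]
        exact neg_mem (add_mem one_mem_Lambda I_mem_Lambda)
    show (-p.1, mulIE p.1 - p.1 + p.2) = p
    rw [h, sub_self, zero_add, hneg]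

theorem gamma_fixed_locus :
    {p : EC × EC | gammaA p = p} = {p : EC × EC | mulIE p.1 = p.1} ∧
      {p : EC × EC | mulIE p.1 = p.1} =
        {p : EC × EC | p.1 = piE 0 ∨ p.1 = piE ((1 + Complex.I) / 2)} ∧
      piE ((1 + Complex.I) / 2) ≠ piE 0 ∧
      Nonempty ({p : EC × EC // gammaA p = p} ≃ (EC ⊕ EC)) := by
  have hT0 : piE ((1 + Complex.I) / 2) ≠ piE 0 := by
    rw [Ne, piE_eq, sub_zero, mem_Lambda_iff]
    rintro ⟨m, n, hmn⟩
    have hre := congrArg Complex.re hmn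
    simp [Complex.div_re] at hre
    have : (2 * m : ℝ) = 1 := by linarith
    have h2 : (2 * m : ℤ) = 1 := by exact_mod_cast this
    omega
  refine ⟨?_, ?_, hT0, ?_⟩
  · ext p; exact gamma_fixed_iff p
  · ext p; exact mulIE_fixed_iff p.1
  · classical
    refine ⟨⟨fun p => if p.val.1 = piE 0 then Sum.inl p.val.2 else Sum.inr p.val.2,
        fun s => Sum.rec
          (fun y => ⟨(piE 0, y), (gamma_fixed_iff _).mpr zero_fixed⟩)
          (fun y => ⟨(piE ((1 + Complex.I) / 2), y), (gamma_fixed_iff _).mpr t0_fixed⟩) s,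
        ?_, ?_⟩⟩
    · rintro ⟨⟨x, y⟩, hp⟩
      by_cases h0 : x = piE 0
      · dsimp only
        rw [if_pos h0]
        exact Subtype.ext (by simp [h0])
      · have hx := (mulIE_fixed_iff x).mp ((gamma_fixed_iff _).mp hp)
        have ht : x = piE ((1 + Complex.I) / 2) := hx.resolve_left h0
        dsimp only
        rw [if_neg h0]
        exact Subtype.ext (by simp [ht])
    · rintro (y | y)
      · simp
      · simp [hT0]
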